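/- Every discrete-type convex space X carries a partial order defined by y ≤ x iff p·y + (1−p)·x = x for all p ∈ (0,1). Verify this relation is reflexive, antisymmetric, and transitive. -/

import Mathlib

/-- On a discrete-type convex space, the relation
`y ≤ x ↔ ∀ p ∈ (0,1), p·y + (1−p)·x = x` is reflexive, antisymmetric and
transitive. -/
theorem stmt13 {X : Type*} (c : ℝ → X → X → X)
    (h_one : ∀ x y, c 1 x y = x)
    (h_idem : ∀ p x, p ∈ Set.Icc (0:ℝ) 1 → c p x x = x)
    (h_comm : ∀ p x y, p ∈ Set.Icc (0:ℝ) 1 → c p x y = c (1 - p) y x)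
    (h_assoc : ∀ p q x y z, p ∈ Set.Icc (0:ℝ) 1 → q ∈ Set.Icc (0:ℝ) 1 →
      p * q ≠ 1 → c p (c q x y) z = c (p * q) x (c (p * (1 - q) / (1 - p * q)) y z))
    (h_disc : ∀ x y : X, ∃ z : X, ∀ p ∈ Set.Ioo (0:ℝ) 1, c p x y = z) :
    (∀ x : X, ∀ p ∈ Set.Ioo (0:ℝ) 1, c p x x = x) ∧
    (∀ x y : X, (∀ p ∈ Set.Ioo (0:ℝ) 1, c p y x = x) →
      (∀ p ∈ Set.Ioo (0:ℝ) 1, c p x y = y) → x = y) ∧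
    (∀ x y z : X, (∀ p ∈ Set.Ioo (0:ℝ) 1, c p z y = y) →
      (∀ p ∈ Set.Ioo (0:ℝ) 1, c p y x = x) →
      (∀ p ∈ Set.Ioo (0:ℝ) 1, c p z x = x)) := by
  refine ⟨?_, ?_, ?_⟩
  · intro x p hp
    exact h_idem p x ⟨hp.1.le, hp.2.le⟩
  · intro x y h1 h2
    have h := h2 (1/2) ⟨by norm_num, by norm_num⟩
    rw [h_comm (1/2) x y ⟨by norm_num, by norm_num⟩] at h
    have h' := h1 (1/2) ⟨by norm_num, by norm_num⟩
    norm_num at h h'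
    exact h'.symm.trans h
  · intro x y z hzy hyx p hp
    obtain ⟨hp0, hp1⟩ := hp
    have hp1' : (0:ℝ) < p + 1 := by linarith
    have hPio : (p+1)/2 ∈ Set.Ioo (0:ℝ) 1 := ⟨by linarith, by linarith⟩
    have hP : (p+1)/2 ∈ Set.Icc (0:ℝ) 1 := ⟨hPio.1.le, hPio.2.le⟩
    have hQio : 2*p/(p+1) ∈ Set.Ioo (0:ℝ) 1 := by
      constructor
      · positivity
      · rw [div_lt_one hp1']; linarith
    have hQ : 2*p/(p+1) ∈ Set.Icc (0:ℝ) 1 := ⟨hQio.1.le, hQio.2.le⟩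
    have hPQ : (p+1)/2 * (2*p/(p+1)) = p := by field_simp
    have hne : (p+1)/2 * (2*p/(p+1)) ≠ 1 := by rw [hPQ]; linarith
    have hfrac : (p+1)/2 * (1 - 2*p/(p+1)) / (1 - (p+1)/2 * (2*p/(p+1))) = 1/2 := by
      have hne1 : (1:ℝ) - p ≠ 0 := ne_of_gt (by linarith)
      rw [hPQ]
      field_simp
      ring
    have key := h_assoc ((p+1)/2) (2*p/(p+1)) z y x hP hQ hne
    rw [hzy _ hQio, hyx _ hPio, hfrac, hPQ,
        hyx (1/2) ⟨by norm_num, by norm_num⟩] at key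
    exact key.symm
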